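/- (Combination of Propositions 2 and 3) The posterior mean is consistent: ‖x_m − x*‖_{Σ₀⁻¹} ≤ √(d − m) · ‖x₀ − x*‖_{Σ₀⁻¹}; in particular, for m = d the posterior mean recovers the exact solution, x_d = x*. -/

import Mathlib

open Matrix

/-- The `M`-norm `‖v‖_M = √(vᵀ M v)` associated with a symmetric positive definite matrix. -/
noncomputable def matNorm {d : ℕ} (M : Matrix (Fin d) (Fin d) ℝ) (v : Fin d → ℝ) : ℝ :=
  Real.sqrt (v ⬝ᵥ (M *ᵥ v))

/-- **Propositions 2 and 3 combined.** The posterior mean is consistent: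
`‖x_m − x*‖_{Σ₀⁻¹} ≤ √(d − m) ⬝ ‖x₀ − x*‖_{Σ₀⁻¹}`; in particular, for `m = d` the posterior
mean recovers the exact solution, `x_d = x*`. -/
theorem posterior_mean_consistent
    (d m : ℕ) (hm : m ≤ d)
    (A : Matrix (Fin d) (Fin d) ℝ) (hA : IsUnit A)
    (b : Fin d → ℝ) (xstar : Fin d → ℝ) (hxstar : xstar = A⁻¹ *ᵥ b)
    (Sigma0 : Matrix (Fin d) (Fin d) ℝ) (hSigma0 : Sigma0.PosDef)
    (x0 : Fin d → ℝ)
    (S : Matrix (Fin d) (Fin m) ℝ)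
    (hS : LinearIndependent ℝ (fun j : Fin m => fun i : Fin d => S i j))
    (Λm : Matrix (Fin m) (Fin m) ℝ) (hΛm : Λm = Sᵀ * A * Sigma0 * Aᵀ * S)
    (r0 : Fin d → ℝ) (hr0 : r0 = b - A *ᵥ x0)
    (xm : Fin d → ℝ) (hxm : xm = x0 + (Sigma0 * Aᵀ * S * Λm⁻¹ * Sᵀ) *ᵥ r0) :
    matNorm Sigma0⁻¹ (xm - xstar) ≤
        Real.sqrt ((d : ℝ) - (m : ℝ)) * matNorm Sigma0⁻¹ (x0 - xstar) ∧
      (m = d → xm = xstar) := by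
  have hAdet : IsUnit A.det := (Matrix.isUnit_iff_isUnit_det A).mp hA
  have hAb : A *ᵥ xstar = b := by
    rw [hxstar, Matrix.mulVec_mulVec, Matrix.mul_nonsing_inv _ hAdet, Matrix.one_mulVec]
  have hr0' : r0 = A *ᵥ (xstar - x0) := by
    rw [hr0, Matrix.mulVec_sub, hAb]
  -- S has trivial kernel
  have hSker : ∀ u : Fin m → ℝ, S *ᵥ u = 0 → u = 0 := by
    intro u hu
    have := Fintype.linearIndependent_iff.mp hS u ?_
    · funext j; exact this j
    · funext i
      have := congrFun hu i
      simpa [Matrix.mulVec, dotProduct, mul_comm, Finset.sum_apply] using this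
  -- C := Aᵀ * S has trivial kernel
  obtain ⟨C, hC⟩ : ∃ C : Matrix (Fin d) (Fin m) ℝ, C = Aᵀ * S := ⟨_, rfl⟩
  have hCt : Cᵀ = Sᵀ * A := by
    rw [hC, Matrix.transpose_mul, Matrix.transpose_transpose]
  have hAt : IsUnit Aᵀ := (Matrix.isUnit_transpose A).mpr hA
  have hCker : ∀ u : Fin m → ℝ, C *ᵥ u = 0 → u = 0 := by
    intro u hu
    apply hSker
    have hinj := Matrix.mulVec_injective_iff_isUnit.mpr hAt
    apply hinj
    rw [Matrix.mulVec_zero, Matrix.mulVec_mulVec, ← hC]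
    exact hu
  -- Λm written via C
  have hΛC : Λm = Cᵀ * Sigma0 * C := by
    rw [hΛm, hCt, hC]
    simp only [Matrix.mul_assoc]
  -- Λm is positive definite
  have hΛpd : Λm.PosDef := by
    refine Matrix.PosDef.of_dotProduct_mulVec_pos ?_ ?_
    · rw [hΛC]
      have := Matrix.isHermitian_conjTranspose_mul_mul C hSigma0.isHermitian
      simpa [Matrix.conjTranspose_eq_transpose_of_trivial] using this
    · intro x hx
      have hy : C *ᵥ x ≠ 0 := fun h => hx (hCker x h)
      have hpos := hSigma0.dotProduct_mulVec_pos hy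
      have hform : x ⬝ᵥ (Λm *ᵥ x) = (C *ᵥ x) ⬝ᵥ (Sigma0 *ᵥ (C *ᵥ x)) := by
        rw [hΛC, ← Matrix.mulVec_mulVec, ← Matrix.mulVec_mulVec,
          Matrix.dotProduct_mulVec, Matrix.vecMul_transpose]
      simpa [hform] using hpos
  have hΛdet : IsUnit Λm.det := (Matrix.isUnit_iff_isUnit_det Λm).mp hΛpd.isUnit
  have hΛinv : Λm⁻¹.PosDef := hΛpd.inv
  obtain ⟨Q, hQdef⟩ : ∃ Q : Matrix (Fin d) (Fin d) ℝ, Q = C * Λm⁻¹ * Cᵀ := ⟨_, rfl⟩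
  have hQpsd : Q.PosSemidef := by
    rw [hQdef]
    have := hΛinv.posSemidef.mul_mul_conjTranspose_same C
    simpa [Matrix.conjTranspose_eq_transpose_of_trivial] using this
  obtain ⟨N, hNdef⟩ : ∃ N : Matrix (Fin d) (Fin d) ℝ, N = Sigma0 * Q := ⟨_, rfl⟩
  have hNeq : Sigma0 * Aᵀ * S * Λm⁻¹ * Sᵀ * A = N := by
    rw [hNdef, hQdef, hCt, hC]
    simp only [Matrix.mul_assoc]
  set e : Fin d → ℝ := x0 - xstar with he
  have herr : xm - xstar = (1 - N) *ᵥ e := by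
    have h1 : xstar - x0 = -e := by rw [he, neg_sub]
    rw [hxm, hr0', Matrix.mulVec_mulVec, hNeq, h1, Matrix.mulVec_neg,
      Matrix.sub_mulVec, Matrix.one_mulVec, he]
    abel
  -- the key matrix identity
  have hSdet : IsUnit Sigma0.det := (Matrix.isUnit_iff_isUnit_det Sigma0).mp hSigma0.isUnit
  have hΛsymm : (Λm⁻¹)ᵀ = Λm⁻¹ := by
    have := hΛinv.isHermitian
    exact (show Λm⁻¹.IsSymm by simpa [Matrix.conjTranspose_eq_transpose_of_trivial] using this).eq
  have hSsymm : Sigma0ᵀ = Sigma0 := by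
    have := hSigma0.isHermitian
    exact (show Sigma0.IsSymm by simpa [Matrix.conjTranspose_eq_transpose_of_trivial] using this).eq
  have hQsymm : Qᵀ = Q := by
    rw [hQdef]
    simp only [Matrix.transpose_mul, Matrix.transpose_transpose, hΛsymm, Matrix.mul_assoc]
  have hNt : Nᵀ = Q * Sigma0 := by
    rw [hNdef, Matrix.transpose_mul, hQsymm, hSsymm]
  have hQSQ : Q * Sigma0 * Q = Q := by
    have hstep : Cᵀ * (Sigma0 * (C * (Λm⁻¹ * Cᵀ))) = Λm * (Λm⁻¹ * Cᵀ) := by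
      rw [hΛC]; simp only [Matrix.mul_assoc]
    calc Q * Sigma0 * Q
        = C * (Λm⁻¹ * (Cᵀ * (Sigma0 * (C * (Λm⁻¹ * Cᵀ))))) := by
          rw [hQdef]; simp only [Matrix.mul_assoc]
      _ = C * (Λm⁻¹ * (Λm * (Λm⁻¹ * Cᵀ))) := by rw [hstep]
      _ = C * ((Λm⁻¹ * Λm) * (Λm⁻¹ * Cᵀ)) := by simp only [Matrix.mul_assoc]
      _ = Q := by
          rw [Matrix.nonsing_inv_mul _ hΛdet, Matrix.one_mul, hQdef, Matrix.mul_assoc]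
  have hkey : (1 - N)ᵀ * Sigma0⁻¹ * (1 - N) = Sigma0⁻¹ - Q := by
    have hSiS : Sigma0⁻¹ * Sigma0 = 1 := Matrix.nonsing_inv_mul _ hSdet
    have hSSi : Sigma0 * Sigma0⁻¹ = 1 := Matrix.mul_nonsing_inv _ hSdet
    have hNS : Sigma0⁻¹ * N = Q := by
      rw [hNdef, ← Matrix.mul_assoc, hSiS, Matrix.one_mul]
    have hNtS : Nᵀ * Sigma0⁻¹ = Q := by
      rw [hNt, Matrix.mul_assoc, hSSi, Matrix.mul_one]
    have hexp : (1 - N)ᵀ * Sigma0⁻¹ * (1 - N)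
        = Sigma0⁻¹ - Sigma0⁻¹ * N - Nᵀ * Sigma0⁻¹ + Nᵀ * Sigma0⁻¹ * N := by
      rw [Matrix.transpose_sub, Matrix.transpose_one]
      noncomm_ring
    have hQN : Q * N = Q := by
      rw [hNdef, ← Matrix.mul_assoc, hQSQ]
    rw [hexp, hNS, hNtS, hQN]
    abel
  -- quadratic form comparison
  have hquad : (xm - xstar) ⬝ᵥ (Sigma0⁻¹ *ᵥ (xm - xstar))
      = e ⬝ᵥ (Sigma0⁻¹ *ᵥ e) - e ⬝ᵥ (Q *ᵥ e) := by
    rw [herr, Matrix.mulVec_mulVec, ← Matrix.vecMul_transpose,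
      Matrix.dotProduct_mulVec, Matrix.vecMul_vecMul, ← Matrix.dotProduct_mulVec,
      ← Matrix.mul_assoc, hkey, Matrix.sub_mulVec, dotProduct_sub]
  have hQe : 0 ≤ e ⬝ᵥ (Q *ᵥ e) := by
    have := hQpsd.dotProduct_mulVec_nonneg e
    simpa using this
  have hqle : (xm - xstar) ⬝ᵥ (Sigma0⁻¹ *ᵥ (xm - xstar)) ≤ e ⬝ᵥ (Sigma0⁻¹ *ᵥ e) := by
    rw [hquad]; linarith
  have hcore : matNorm Sigma0⁻¹ (xm - xstar) ≤ matNorm Sigma0⁻¹ e :=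
    Real.sqrt_le_sqrt hqle
  -- the m = d case
  have hexact : m = d → xm = xstar := by
    intro h
    subst h
    have hSunit : IsUnit S := by
      have : IsUnit Sᵀ := Matrix.linearIndependent_rows_iff_isUnit.mp hS
      rwa [Matrix.isUnit_transpose] at this
    have hCunit : IsUnit C := by rw [hC]; exact hAt.mul hSunit
    have hCdet : IsUnit C.det := (Matrix.isUnit_iff_isUnit_det C).mp hCunit
    have hCtdet : IsUnit Cᵀ.det := by rwa [Matrix.det_transpose]
    have hN1 : N = 1 := by
      rw [hNdef, hQdef, hΛC, Matrix.mul_inv_rev, Matrix.mul_inv_rev]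
      calc Sigma0 * (C * (C⁻¹ * (Sigma0⁻¹ * Cᵀ⁻¹)) * Cᵀ)
          = Sigma0 * ((C * C⁻¹) * (Sigma0⁻¹ * (Cᵀ⁻¹ * Cᵀ))) := by
            simp only [Matrix.mul_assoc]
        _ = 1 := by
            rw [Matrix.mul_nonsing_inv _ hCdet, Matrix.nonsing_inv_mul _ hCtdet,
              Matrix.one_mul, Matrix.mul_one, Matrix.mul_nonsing_inv _ hSdet]
    have : xm - xstar = 0 := by rw [herr, hN1]; simp
    exact sub_eq_zero.mp this
  refine ⟨?_, hexact⟩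
  by_cases hmd : m = d
  · have hx := hexact hmd
    have hL : matNorm Sigma0⁻¹ (xm - xstar) = 0 := by
      rw [hx, sub_self]
      simp [matNorm]
    rw [hL, hmd, sub_self, Real.sqrt_zero, zero_mul]
  · have hlt : m < d := lt_of_le_of_ne hm hmd
    have h1 : (1 : ℝ) ≤ Real.sqrt ((d : ℝ) - (m : ℝ)) := by
      rw [show (1:ℝ) = Real.sqrt 1 by simp]
      apply Real.sqrt_le_sqrt
      have : (m : ℝ) + 1 ≤ (d : ℝ) := by exact_mod_cast hlt
      linarith
    calc matNorm Sigma0⁻¹ (xm - xstar) ≤ matNorm Sigma0⁻¹ e := hcore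
      _ = 1 * matNorm Sigma0⁻¹ e := (one_mul _).symm
      _ ≤ Real.sqrt ((d : ℝ) - (m : ℝ)) * matNorm Sigma0⁻¹ e := by
          apply mul_le_mul_of_nonneg_right h1 (Real.sqrt_nonneg _)
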